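/- Let d ≥ 1, T > 0, δ ∈ (0, T], λ > 0. Let Σ_μ, Σ_R, Σ̄_J ∈ ℝ^{d×d} be symmetric positive definite, κ ∈ ℝ^{d×d} be positive definite, and q₀ ∈ ℝ^{d×d} be symmetric positive semidefinite. Suppose Q : [0, T] → ℝ^{d×d} is differentiable with Q(0) = q₀, Q(t) symmetric positive semidefinite for every t ∈ [0, T], and Q'(t) = Σ_μ − κ Q(t) − Q(t) κᵀ − Q(t)(Σ_R^{-1} + λ·Σ̄_J^{-1}) Q(t) for all t ∈ [0, T]. Then tr(Q(t)) ≤ C_J/√λ for all t ∈ [δ, T], where C_J = √( d·tr(Σ̄_J)·( tr(Σ_μ) + tr(q₀)/(e·δ) ) ) and e = exp(1). -/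

import Mathlib

open Matrix Real Set


lemma pd_trace_pos {n : ℕ} (hn : 0 < n) {A : Matrix (Fin n) (Fin n) ℝ} (hA : A.PosDef) :
    0 < A.trace := by
  have : ∀ i : Fin n, 0 < A i i := by
    intro i
    have h := hA.dotProduct_mulVec_pos (x := Pi.single i 1) (by simp [Pi.single_eq_same, Function.ne_iff])
    simpa [dotProduct, Matrix.mulVec, Pi.single_apply, Finset.sum_ite_eq', Finset.mul_sum] using h
  have : (0:ℝ) < ∑ i, A i i := by
    apply Finset.sum_pos (fun i _ => this i)
    have : Nonempty (Fin n) := ⟨⟨0, hn⟩⟩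
    exact Finset.univ_nonempty
  simpa [Matrix.trace, Matrix.diag] using this

lemma psd_trace_nonneg {n : ℕ} {A : Matrix (Fin n) (Fin n) ℝ} (hA : A.PosSemidef) :
    0 ≤ A.trace := by
  have : ∀ i : Fin n, 0 ≤ A i i := by
    intro i
    have h := hA.dotProduct_mulVec_nonneg (Pi.single i 1)
    simpa [dotProduct, Matrix.mulVec, Pi.single_apply, Finset.sum_ite_eq', Finset.mul_sum] using h
  have : (0:ℝ) ≤ ∑ i, A i i := Finset.sum_nonneg (fun i _ => this i)
  simpa [Matrix.trace, Matrix.diag] using this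

lemma quad_trace_nonneg {n : ℕ} {B Q : Matrix (Fin n) (Fin n) ℝ}
    (hB : ∀ x : Fin n → ℝ, 0 ≤ x ⬝ᵥ (B *ᵥ x)) (hQ : Q.PosSemidef) :
    0 ≤ (B * Q).trace := by
  obtain ⟨C, hC⟩ : ∃ C : Matrix (Fin n) (Fin n) ℝ, Q = Cᴴ * C := by
    open scoped MatrixOrder in
    obtain ⟨X, hX, -, hXX⟩ := CFC.exists_sqrt_of_isSelfAdjoint_of_quasispectrumRestricts hQ.1
      (QuasispectrumRestricts.nnreal_of_nonneg hQ.nonneg)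
    exact ⟨X, by rw [← hXX, ← Matrix.star_eq_conjTranspose, hX.star_eq]⟩
  rw [hC, ← Matrix.mul_assoc, Matrix.trace_mul_cycle]
  rw [Matrix.trace]
  apply Finset.sum_nonneg
  intro i _
  have h := hB (fun j => C i j)
  simp only [Matrix.diag_apply, Matrix.mul_apply, Matrix.conjTranspose_apply, star_trivial]
  simp only [dotProduct, Matrix.mulVec, dotProduct, Finset.mul_sum] at h
  calc (0:ℝ) ≤ ∑ j, ∑ k, C i j * (B j k * C i k) := h
    _ = ∑ k, (∑ j, C i j * B j k) * C i k := by
        rw [Finset.sum_comm]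
        congr 1; ext k
        rw [Finset.sum_mul]
        congr 1; ext j
        ring

lemma trace_sq_le_CS {n : ℕ} {S Q : Matrix (Fin n) (Fin n) ℝ} (hS : S.PosDef) (hQ : Qᵀ = Q) :
    Q.trace ^ 2 ≤ S.trace * (Q * S⁻¹ * Q).trace := by
  obtain ⟨R, hRsa, -, hRR⟩ : ∃ R : Matrix (Fin n) (Fin n) ℝ, IsSelfAdjoint R ∧
      QuasispectrumRestricts R ContinuousMap.realToNNReal ∧ R * R = S := by
    open scoped MatrixOrder in
    exact CFC.exists_sqrt_of_isSelfAdjoint_of_quasispectrumRestricts hS.posSemidef.1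
      (QuasispectrumRestricts.nnreal_of_nonneg hS.posSemidef.nonneg)
  have hRsym : Rᵀ = R := by
    have h := hRsa
    have h2 : Rᴴ = Rᵀ := by ext i j; simp [Matrix.conjTranspose_apply]
    rw [← h2]; exact h
  have hdet : R.det ≠ 0 := by
    intro h
    have : S.det = 0 := by rw [← hRR, Matrix.det_mul, h, mul_zero]
    exact (ne_of_gt hS.det_pos) this
  have hRinv : R * R⁻¹ = 1 := Matrix.mul_nonsing_inv R (isUnit_iff_ne_zero.mpr hdet)
  have hSinv : S⁻¹ = R⁻¹ * R⁻¹ := by rw [← hRR, Matrix.mul_inv_rev]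
  have hRinvsym : (R⁻¹)ᵀ = R⁻¹ := by rw [Matrix.transpose_nonsing_inv, hRsym]
  set A := R⁻¹ * Q with hAdef
  have htrQ : Q.trace = (R * A).trace := by
    rw [hAdef, ← Matrix.mul_assoc, hRinv, Matrix.one_mul]
  have hQSQ : Q * S⁻¹ * Q = Aᵀ * A := by
    rw [hAdef, Matrix.transpose_mul, hRinvsym, hQ, hSinv]
    simp only [Matrix.mul_assoc]
  rw [htrQ, hQSQ]
  -- Cauchy-Schwarz over pairs
  have h1 : (R * A).trace = ∑ p : Fin n × Fin n, R p.1 p.2 * A p.2 p.1 := by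
    rw [Matrix.trace]
    rw [Fintype.sum_prod_type]
    simp [Matrix.diag_apply, Matrix.mul_apply]
  have h2 : S.trace = ∑ p : Fin n × Fin n, (R p.1 p.2) ^ 2 := by
    rw [← hRR, Matrix.trace, Fintype.sum_prod_type]
    simp only [Matrix.diag_apply, Matrix.mul_apply]
    congr 1; ext i; congr 1; ext j
    rw [sq]
    nth_rewrite 2 [← hRsym]
    rfl
  have h3 : (Aᵀ * A).trace = ∑ p : Fin n × Fin n, (A p.2 p.1) ^ 2 := by
    rw [Matrix.trace, Fintype.sum_prod_type]
    simp only [Matrix.diag_apply, Matrix.mul_apply, Matrix.transpose_apply]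
    congr 1; ext i; congr 1; ext j
    rw [sq]
  rw [h1, h2, h3]
  exact Finset.sum_mul_sq_le_sq_mul_sq Finset.univ _ _

lemma ode_trace_bound {T δ a c : ℝ} {f f' : ℝ → ℝ}
    (hδ0 : 0 < δ) (hδT : δ ≤ T) (ha : 0 < a) (hc : 0 < c) (hf00 : 0 ≤ f 0)
    (hderiv : ∀ t ∈ Icc (0:ℝ) T, HasDerivAt f (f' t) t)
    (hle : ∀ t ∈ Icc (0:ℝ) T, f' t ≤ a - c * (f t)^2) :
    ∀ t ∈ Icc δ T, f t ≤ Real.sqrt ((a + f 0 / (Real.exp 1 * δ)) / c) := by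
  have he : (0:ℝ) < Real.exp 1 := Real.exp_pos 1
  set f0 := f 0 with hf0def
  set M := Real.sqrt ((a + f0 / (Real.exp 1 * δ)) / c) with hMdef
  have harg : 0 < (a + f0 / (Real.exp 1 * δ)) / c := by positivity
  have hM : 0 < M := Real.sqrt_pos.mpr harg
  have hM2 : c * M ^ 2 = a + f0 / (Real.exp 1 * δ) := by
    rw [hMdef, Real.sq_sqrt harg.le]
    field_simp
  intro t ht
  by_contra hcon
  push_neg at hcon
  have htT : t ∈ Icc (0:ℝ) T := ⟨le_trans hδ0.le ht.1, ht.2⟩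
  -- Step A : antitone once above M
  have key : ∀ s1 ∈ Icc (0:ℝ) t, (∀ u ∈ Ioc s1 t, M < f u) → f t ≤ f s1 := by
    intro s1 hs1 hgt
    have hsub : Icc s1 t ⊆ Icc 0 T := Icc_subset_Icc hs1.1 htT.2
    have hanti : AntitoneOn f (Icc s1 t) := by
      apply antitoneOn_of_deriv_nonpos (convex_Icc _ _)
      · exact fun u hu => (hderiv u (hsub hu)).continuousAt.continuousWithinAt
      · intro u hu
        rw [interior_Icc] at hu
        exact ((hderiv u (hsub (Ioo_subset_Icc_self hu))).differentiableAt).differentiableWithinAt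
      · intro u hu
        rw [interior_Icc] at hu
        have hu' : u ∈ Icc (0:ℝ) T := hsub (Ioo_subset_Icc_self hu)
        rw [(hderiv u hu').deriv]
        have hMu : M < f u := hgt u ⟨hu.1, hu.2.le⟩
        have h1 : c * M ^ 2 ≤ c * (f u) ^ 2 :=
          mul_le_mul_of_nonneg_left (pow_le_pow_left₀ hM.le hMu.le 2) hc.le
        have h2 : a ≤ c * M ^ 2 := by
          rw [hM2]; have : 0 ≤ f0 / (Real.exp 1 * δ) := by positivity
          linarith
        linarith [hle u hu']
    exact hanti ⟨le_refl s1, hs1.2⟩ ⟨hs1.2, le_refl t⟩ hs1.2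
  -- Step B : f is above M on all of [0, t]
  have hall : ∀ s ∈ Icc (0:ℝ) t, M < f s := by
    by_contra hex
    push_neg at hex
    obtain ⟨s, hs, hfs⟩ := hex
    set K := {u : ℝ | u ∈ Icc s t ∧ f u ≤ M} with hKdef
    have hKne : K.Nonempty := ⟨s, ⟨le_refl s, hs.2⟩, hfs⟩
    have hKbdd : BddAbove K := ⟨t, fun u hu => hu.1.2⟩
    set s1 := sSup K with hs1def
    have hs1mem : s1 ∈ Icc s t :=
      ⟨le_csSup hKbdd ⟨⟨le_refl s, hs.2⟩, hfs⟩, csSup_le hKne fun u hu => hu.1.2⟩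
    have hs1T : s1 ∈ Icc (0:ℝ) T := ⟨le_trans hs.1 hs1mem.1, le_trans hs1mem.2 htT.2⟩
    have hfs1 : f s1 ≤ M := by
      have hcl : s1 ∈ closure K := csSup_mem_closure hKne hKbdd
      have hca : ContinuousAt f s1 := (hderiv s1 hs1T).continuousAt
      have hne : (nhdsWithin s1 K).NeBot := mem_closure_iff_nhdsWithin_neBot.mp hcl
      exact le_of_tendsto hca.continuousWithinAt
        (eventually_nhdsWithin_of_forall (fun u (hu : u ∈ K) => hu.2))
    have hs1t : s1 < t := by
      rcases lt_or_eq_of_le hs1mem.2 with h | h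
      · exact h
      · exfalso; rw [h] at hfs1; exact absurd hcon (not_lt.mpr hfs1)
    have hgt : ∀ u ∈ Ioc s1 t, M < f u := by
      intro u hu
      by_contra hfu
      push_neg at hfu
      have : u ∈ K := ⟨⟨le_trans hs1mem.1 hu.1.le, hu.2⟩, hfu⟩
      exact absurd (le_csSup hKbdd this) (not_le.mpr hu.1)
    have := key s1 ⟨hs1T.1, hs1mem.2⟩ hgt
    linarith
  -- Step C : Gronwall-type estimate
  set g : ℝ → ℝ := fun u => Real.exp (c * M * u) * (f u - a / (c * M)) with hgdef
  have hganti : AntitoneOn g (Icc 0 t) := by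
    have hsub : Icc (0:ℝ) t ⊆ Icc 0 T := Icc_subset_Icc (le_refl 0) htT.2
    have hgderiv : ∀ u ∈ Icc (0:ℝ) t,
        HasDerivAt g (Real.exp (c * M * u) * (f' u + c * M * f u - a)) u := by
      intro u hu
      have h1 : HasDerivAt (fun x : ℝ => Real.exp (c * M * x))
          (Real.exp (c * M * u) * (c * M)) u := by
        simpa using (((hasDerivAt_id u).const_mul (c * M)).exp)
      have h2 : HasDerivAt (fun x => f x - a / (c * M)) (f' u) u :=
        (hderiv u (hsub hu)).sub_const _
      have := h1.mul h2
      convert this using 1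
      · rfl
      · rfl
      · rfl
      · have hcM : c * M ≠ 0 := by positivity
        have hca : c * M * (a / (c * M)) = a := by field_simp
        linear_combination (Real.exp (c * M * u)) * hca
    apply antitoneOn_of_deriv_nonpos (convex_Icc _ _)
    · exact fun u hu => (hgderiv u hu).continuousAt.continuousWithinAt
    · intro u hu
      rw [interior_Icc] at hu
      exact (hgderiv u (Ioo_subset_Icc_self hu)).differentiableAt.differentiableWithinAt
    · intro u hu
      rw [interior_Icc] at hu
      have hu' : u ∈ Icc (0:ℝ) t := Ioo_subset_Icc_self hu
      rw [(hgderiv u hu').deriv]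
      have hfu : M < f u := hall u hu'
      have h1 : c * (M * f u) ≤ c * ((f u) * f u) :=
        mul_le_mul_of_nonneg_left (mul_le_mul_of_nonneg_right hfu.le (le_trans hM.le hfu.le)) hc.le
      have h2 : f' u ≤ a - c * (f u)^2 := hle u (hsub hu')
      have : f' u + c * M * f u - a ≤ 0 := by nlinarith
      exact mul_nonpos_of_nonneg_of_nonpos (Real.exp_pos _).le this
  have hg0 : g 0 = f0 - a / (c * M) := by simp [hgdef, hf0def]
  have hgt0 : g t ≤ f0 := by
    have := hganti ⟨le_refl 0, htT.1⟩ ⟨htT.1, le_refl t⟩ htT.1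
    rw [hg0] at this
    have : g t ≤ f0 - a / (c * M) := this
    have hpos : 0 ≤ a / (c * M) := by positivity
    linarith
  have hft : f t - a / (c * M) ≤ f0 * Real.exp (-(c * M * t)) := by
    have hE : (0:ℝ) < Real.exp (c * M * t) := Real.exp_pos _
    have hgt : Real.exp (c * M * t) * (f t - a / (c * M)) ≤ f0 := hgt0
    have hdiv : f t - a / (c * M) ≤ f0 / Real.exp (c * M * t) := by
      rw [le_div_iff₀ hE]
      linarith [mul_comm (f t - a / (c * M)) (Real.exp (c * M * t))]
    simpa [Real.exp_neg, div_eq_mul_inv] using hdiv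
  have hexp : Real.exp (-(c * M * t)) ≤ 1 / (Real.exp 1 * (c * M * δ)) := by
    have h1 : Real.exp 1 * (c * M * δ) ≤ Real.exp (c * M * δ) := by
      have := Real.add_one_le_exp (c * M * δ - 1)
      have h2 : Real.exp (c * M * δ - 1) = Real.exp (c * M * δ) / Real.exp 1 := by
        rw [Real.exp_sub]
      rw [h2] at this
      rw [le_div_iff₀ he] at this
      nlinarith
    have h3 : Real.exp (c * M * δ) ≤ Real.exp (c * M * t) := by
      apply Real.exp_le_exp.mpr
      exact mul_le_mul_of_nonneg_left ht.1 (by positivity)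
    rw [Real.exp_neg]
    rw [inv_eq_one_div]
    apply one_div_le_one_div_of_le
    · positivity
    · linarith
  have hf0exp : f0 * Real.exp (-(c * M * t)) ≤ f0 / (Real.exp 1 * (c * M * δ)) := by
    rw [div_eq_mul_one_div]
    exact mul_le_mul_of_nonneg_left hexp hf00
  have hfinal : f t ≤ M := by
    have h4 : f t ≤ a / (c * M) + f0 / (Real.exp 1 * (c * M * δ)) := by linarith
    have h5 : a / (c * M) + f0 / (Real.exp 1 * (c * M * δ)) = (a + f0 / (Real.exp 1 * δ)) / (c * M) := by
      field_simp
    have h6 : (a + f0 / (Real.exp 1 * δ)) / (c * M) = M := by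
      rw [← hM2]
      field_simp
    rw [h5, h6] at h4
    exact h4
  linarith


/-- bound on the trace of the solution of the matrix Riccati equation
for the conditional covariance of the `J`-investor. -/
theorem trace_Q_J_bound
    (d : ℕ) (hd : 1 ≤ d)
    (T δ lam : ℝ) (hT : 0 < T) (hδ0 : 0 < δ) (hδT : δ ≤ T) (hlam : 0 < lam)
    (Sμ SR SJ κ q₀ : Matrix (Fin d) (Fin d) ℝ)
    (hSμ : Sμ.PosDef) (hSR : SR.PosDef) (hSJ : SJ.PosDef)
    (hκ : ∀ x : Fin d → ℝ, x ≠ 0 → 0 < x ⬝ᵥ (κ *ᵥ x))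
    (hq₀ : q₀.PosSemidef)
    (Q : ℝ → Matrix (Fin d) (Fin d) ℝ)
    (hQ0 : Q 0 = q₀)
    (hQpsd : ∀ t ∈ Icc (0 : ℝ) T, (Q t).PosSemidef)
    (hQdiff : ∀ t ∈ Icc (0 : ℝ) T, ∀ i j : Fin d,
      HasDerivAt (fun s => Q s i j)
        ((Sμ - κ * Q t - Q t * κᵀ - Q t * (SR⁻¹ + lam • SJ⁻¹) * Q t) i j) t) :
    ∀ t ∈ Icc δ T,
      (Q t).trace ≤
        Real.sqrt ((d : ℝ) * SJ.trace *
          (Sμ.trace + q₀.trace / (Real.exp 1 * δ))) / Real.sqrt lam := by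
  have hd0 : 0 < d := hd
  have haS : 0 < Sμ.trace := pd_trace_pos hd0 hSμ
  have hJt : 0 < SJ.trace := pd_trace_pos hd0 hSJ
  set a := Sμ.trace with hadef
  set c := lam / ((d : ℝ) * SJ.trace) with hcdef
  have hc : 0 < c := by positivity
  set f : ℝ → ℝ := fun s => (Q s).trace with hfdef
  set F : ℝ → ℝ :=
    fun t => (Sμ - κ * Q t - Q t * κᵀ - Q t * (SR⁻¹ + lam • SJ⁻¹) * Q t).trace with hFdef
  have hf0q : f 0 = q₀.trace := by rw [hfdef]; simp only; rw [hQ0]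
  have hf00 : 0 ≤ f 0 := by rw [hf0q]; exact psd_trace_nonneg hq₀
  have hderiv : ∀ t ∈ Icc (0:ℝ) T, HasDerivAt f (F t) t := by
    intro t ht
    have h := HasDerivAt.fun_sum (fun i (_ : i ∈ Finset.univ) => hQdiff t ht i i)
    simpa [hfdef, hFdef, Matrix.trace, Matrix.diag] using h
  have hle : ∀ t ∈ Icc (0:ℝ) T, F t ≤ a - c * (f t)^2 := by
    intro t ht
    have hpsd := hQpsd t ht
    have hQsym : (Q t)ᵀ = Q t := by
      have h := hpsd.1
      have h2 : (Q t)ᴴ = (Q t)ᵀ := by ext i j; simp [Matrix.conjTranspose_apply]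
      rw [← h2]; exact h
    have hexp : F t = a - (κ * Q t).trace - (Q t * κᵀ).trace
        - ((Q t * SR⁻¹ * Q t).trace + lam * (Q t * SJ⁻¹ * Q t).trace) := by
      rw [hFdef]
      simp only
      have hsplit : Q t * (SR⁻¹ + lam • SJ⁻¹) * Q t
          = Q t * SR⁻¹ * Q t + lam • (Q t * SJ⁻¹ * Q t) := by
        rw [Matrix.mul_add, Matrix.add_mul, Matrix.mul_smul, Matrix.smul_mul]
      rw [hsplit, Matrix.trace_sub, Matrix.trace_sub, Matrix.trace_sub, Matrix.trace_add,
        Matrix.trace_smul]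
      simp [smul_eq_mul, hadef]
    have h1 : 0 ≤ (κ * Q t).trace := by
      apply quad_trace_nonneg _ hpsd
      intro x
      rcases eq_or_ne x 0 with rfl | hx
      · simp
      · exact (hκ x hx).le
    have h2 : 0 ≤ (Q t * κᵀ).trace := by
      rw [Matrix.trace_mul_comm]
      apply quad_trace_nonneg _ hpsd
      intro x
      have hxx : x ⬝ᵥ (κᵀ *ᵥ x) = x ⬝ᵥ (κ *ᵥ x) := by
        rw [Matrix.mulVec_transpose, dotProduct_comm, ← Matrix.dotProduct_mulVec]
      rw [hxx]
      rcases eq_or_ne x 0 with rfl | hx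
      · simp
      · exact (hκ x hx).le
    have h3 : 0 ≤ (Q t * SR⁻¹ * Q t).trace := by
      have hSRinv : SR⁻¹.PosSemidef := hSR.inv.posSemidef
      have hconj := hSRinv.mul_mul_conjTranspose_same (Q t)
      have hQH : (Q t)ᴴ = Q t := hpsd.1
      rw [hQH] at hconj
      exact psd_trace_nonneg hconj
    have h4 : (f t)^2 ≤ SJ.trace * (Q t * SJ⁻¹ * Q t).trace := trace_sq_le_CS hSJ hQsym
    have h5 : c * (f t)^2 ≤ lam * (Q t * SJ⁻¹ * Q t).trace := by
      have hd1 : (1:ℝ) ≤ d := by exact_mod_cast hd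
      have hX : 0 ≤ (Q t * SJ⁻¹ * Q t).trace := by nlinarith [sq_nonneg (f t)]
      rw [hcdef, div_mul_eq_mul_div, div_le_iff₀ (by positivity)]
      calc lam * (f t)^2 ≤ lam * (SJ.trace * (Q t * SJ⁻¹ * Q t).trace) :=
            mul_le_mul_of_nonneg_left h4 hlam.le
        _ ≤ lam * (Q t * SJ⁻¹ * Q t).trace * ((d:ℝ) * SJ.trace) := by
            have hnn : 0 ≤ lam * (SJ.trace * (Q t * SJ⁻¹ * Q t).trace) :=
              mul_nonneg hlam.le (mul_nonneg hJt.le hX)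
            nlinarith [mul_le_mul_of_nonneg_left hd1 hnn]
    rw [hexp]
    linarith
  have hode := ode_trace_bound hδ0 hδT haS hc hf00 hderiv hle
  intro t ht
  have hb := hode t ht
  rw [hf0q] at hb
  have hq0tr : 0 ≤ q₀.trace := psd_trace_nonneg hq₀
  have heq : (a + q₀.trace / (Real.exp 1 * δ)) / c
      = ((d:ℝ) * SJ.trace * (Sμ.trace + q₀.trace / (Real.exp 1 * δ))) / lam := by
    rw [hcdef, hadef]
    field_simp
  rw [heq, Real.sqrt_div (by positivity) lam] at hb
  exact hb
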